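/- arXiv:2003.13769 — 5 statements merged into one kernel-verified Lean document; each statement's English description precedes it below -/
import Mathlib

section
/- Let V be a nonzero finite-dimensional real vector space and E a nondegenerate alternating bilinear form on V. Then the Siegel space 𝔖(V, E) is nonempty: there exists a linear endomorphism J of V with J ∘ J = -id such that E(x, Jy) = E(y, Jx) for all x, y ∈ V and E(x, Jx) > 0 for all x ≠ 0. -/
open Matrix
open scoped MatrixOrder

/-- The Siegel space of a nonzero finite-dimensional real symplectic space is
nonempty. -/
theorem siegel_space_nonempty
    (V : Type*) [AddCommGroup V] [Module ℝ V] [FiniteDimensional ℝ V] [Nontrivial V]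
    (E : V →ₗ[ℝ] V →ₗ[ℝ] ℝ)
    (halt : ∀ x, E x x = 0)
    (hnd : ∀ x, (∀ y, E x y = 0) → x = 0) :
    ∃ J : V →ₗ[ℝ] V,
      J ∘ₗ J = -LinearMap.id ∧
      (∀ x y, E x (J y) = E y (J x)) ∧
      (∀ x, x ≠ 0 → 0 < E x (J x)) := by
  classical
  set n := Module.finrank ℝ V with hn
  let b : Module.Basis (Fin n) ℝ V := Module.finBasis ℝ V
  set G : Matrix (Fin n) (Fin n) ℝ := Matrix.of (fun i j => E (b i) (b j)) with hG
  -- coordinate formula for E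
  have hE : ∀ x y : V, E x y = (b.repr x : Fin n → ℝ) ⬝ᵥ (G *ᵥ (b.repr y)) := by
    intro x y
    conv_lhs => rw [← b.sum_repr x, ← b.sum_repr y]
    simp only [map_sum, _root_.map_smul, LinearMap.sum_apply, LinearMap.smul_apply, smul_eq_mul,
      dotProduct, Matrix.mulVec, Matrix.of_apply, hG]
    simp only [Finset.mul_sum]
    rw [Finset.sum_comm]
    exact Finset.sum_congr rfl fun i _ => Finset.sum_congr rfl fun j _ => by ring
  -- E is antisymmetric
  have hskew : ∀ x y : V, E x y = - E y x := by
    intro x y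
    have h := halt (x + y)
    simp only [map_add, LinearMap.add_apply] at h
    have h1 := halt x; have h2 := halt y
    linarith
  -- G is skew-symmetric
  have hGT : Gᵀ = -G := by
    ext i j
    simp only [Matrix.transpose_apply, Matrix.neg_apply, hG, Matrix.of_apply]
    exact hskew (b j) (b i) ▸ rfl
  -- G is invertible
  have hdet : G.det ≠ 0 := by
    intro h
    have hdt : Gᵀ.det = 0 := by rwa [Matrix.det_transpose]
    obtain ⟨v, hv0, hv⟩ := Matrix.exists_mulVec_eq_zero_iff.mpr hdt
    set x := b.equivFun.symm v with hx
    have hrx : (b.repr x : Fin n → ℝ) = v := by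
      rw [← Module.Basis.equivFun_apply, hx, LinearEquiv.apply_symm_apply]
    have : x = 0 := by
      apply hnd
      intro y
      rw [hE x y, hrx, Matrix.dotProduct_mulVec, ← Matrix.mulVec_transpose, hv,
        zero_dotProduct]
    rw [this] at hrx
    simp at hrx
    exact hv0 hrx.symm
  have hmulVec_ne : ∀ v : Fin n → ℝ, v ≠ 0 → G *ᵥ v ≠ 0 := fun v hv h =>
    hv (Matrix.eq_zero_of_mulVec_eq_zero hdet h)
  -- P = Gᵀ * G is positive definite
  set P : Matrix (Fin n) (Fin n) ℝ := Gᵀ * G with hPdef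
  have hP : P.PosDef := by
    refine Matrix.PosDef.of_dotProduct_mulVec_pos ?_ fun v hv => ?_
    · have : Pᵀ = P := by rw [hPdef, Matrix.transpose_mul, Matrix.transpose_transpose]
      rw [Matrix.IsHermitian, Matrix.conjTranspose_eq_transpose_of_trivial]; exact this
    · rw [star_trivial, hPdef, ← Matrix.mulVec_mulVec, Matrix.dotProduct_mulVec,
        ← Matrix.mulVec_transpose, Matrix.transpose_transpose]
      exact Matrix.dotProduct_star_self_pos_iff.mpr (hmulVec_ne v hv) |>.trans_eq (by simp) |>.trans_le le_rfl
  have hPS := hP.posSemidef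
  set S : Matrix (Fin n) (Fin n) ℝ := CFC.sqrt P with hSdef
  have hSsd : S.PosSemidef := (CFC.sqrt_nonneg P).posSemidef
  have hSS : S * S = P := CFC.sqrt_mul_sqrt_self P hPS.nonneg
  have hPdet : P.det ≠ 0 := by
    rw [hPdef, Matrix.det_mul, Matrix.det_transpose]
    exact mul_ne_zero hdet hdet
  have hSdet : S.det ≠ 0 := by
    intro h
    apply hPdet
    rw [← hSS, Matrix.det_mul, h, mul_zero]
  have hS : S.PosDef := by
    refine Matrix.PosDef.of_dotProduct_mulVec_pos hSsd.1 fun v hv => lt_of_le_of_ne (hSsd.dotProduct_mulVec_nonneg v) fun h => hv ?_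
    have h0 : star v ⬝ᵥ S *ᵥ v = 0 := h.symm
    have := (hSsd.dotProduct_mulVec_zero_iff v).mp h0
    exact Matrix.eq_zero_of_mulVec_eq_zero hSdet this
  have hSinv : (S⁻¹).PosDef := hS.inv
  -- G * Gᵀ = P as well (G skew)
  have hGGT : G * Gᵀ = P := by
    rw [hGT, hPdef, hGT, Matrix.mul_neg, Matrix.neg_mul]
  have hc1 : S * (S⁻¹ * G) = G := by
    rw [← Matrix.mul_assoc, Matrix.mul_nonsing_inv _ hSdet.isUnit, Matrix.one_mul]
  have hc2 : S⁻¹ * (S * G) = G := by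
    rw [← Matrix.mul_assoc, Matrix.nonsing_inv_mul _ hSdet.isUnit, Matrix.one_mul]
  -- T = Gᵀ * S⁻¹ * G is positive definite with square P, hence T = S
  set T : Matrix (Fin n) (Fin n) ℝ := Gᵀ * S⁻¹ * G with hTdef
  have hT : T.PosDef := by
    refine Matrix.PosDef.of_dotProduct_mulVec_pos ?_ fun v hv => ?_
    · have h1 : Tᵀ = T := by
        rw [hTdef, Matrix.transpose_mul, Matrix.transpose_mul, Matrix.transpose_transpose]
        have : (S⁻¹)ᵀ = S⁻¹ := by
          have := hSinv.1
          rw [Matrix.IsHermitian, Matrix.conjTranspose_eq_transpose_of_trivial] at this; exact this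
        rw [this, Matrix.mul_assoc]
      rw [Matrix.IsHermitian, Matrix.conjTranspose_eq_transpose_of_trivial]; exact h1
    · rw [star_trivial, hTdef, ← Matrix.mulVec_mulVec, ← Matrix.mulVec_mulVec,
        Matrix.dotProduct_mulVec, ← Matrix.mulVec_transpose, Matrix.transpose_transpose]
      have := hSinv.dotProduct_mulVec_pos (hmulVec_ne v hv)
      rwa [star_trivial] at this
  have hTT : T * T = P := by
    calc T * T = Gᵀ * (S⁻¹ * (G * (Gᵀ * (S⁻¹ * G)))) := by
          simp only [hTdef, Matrix.mul_assoc]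
      _ = Gᵀ * (S⁻¹ * (S * (S * (S⁻¹ * G)))) := by
          rw [← Matrix.mul_assoc G Gᵀ, hGGT, ← hSS, Matrix.mul_assoc]
      _ = Gᵀ * G := by rw [hc1, hc2]
      _ = P := hPdef.symm
  have hTS : T = S := (CFC.sqrt_unique hTT hT.posSemidef.nonneg).symm
  -- the complex structure matrix
  set K : Matrix (Fin n) (Fin n) ℝ := -(S⁻¹ * G) with hKdef
  have hGK : G * K = S := by
    have h1 : G * K = T := by
      rw [hKdef, hTdef, hGT]
      simp [Matrix.mul_assoc]
    rw [h1, hTS]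
  have hGSG : G * (S⁻¹ * G) = -S := by
    have := hGK
    rw [hKdef, Matrix.mul_neg, neg_eq_iff_eq_neg] at this
    exact this
  have hKK : K * K = -1 := by
    rw [hKdef, Matrix.neg_mul, Matrix.mul_neg, neg_neg, Matrix.mul_assoc, hGSG,
      Matrix.mul_neg, Matrix.nonsing_inv_mul _ hSdet.isUnit]
  -- S is symmetric
  have hSsymm : Sᵀ = S := by
    have := hSsd.1
    rw [Matrix.IsHermitian, Matrix.conjTranspose_eq_transpose_of_trivial] at this; exact this
  -- define J
  refine ⟨Matrix.toLin b b K, ?_, ?_, ?_⟩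
  · rw [← Matrix.toLin_mul, hKK, map_neg, Matrix.toLin_one]
  all_goals {
    have hrepr : ∀ y : V, (b.repr (Matrix.toLin b b K y) : Fin n → ℝ) = K *ᵥ b.repr y := by
      intro y
      have h := LinearMap.toMatrix_mulVec_repr b b (Matrix.toLin b b K) y
      rw [LinearMap.toMatrix_toLin] at h
      exact h.symm
    have hsymm : ∀ u w : Fin n → ℝ, u ⬝ᵥ S *ᵥ w = w ⬝ᵥ S *ᵥ u := by
      intro u w
      rw [Matrix.dotProduct_mulVec, ← Matrix.mulVec_transpose, hSsymm, dotProduct_comm]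
    first
    | -- symmetry
      intro x y
      rw [hE, hE, hrepr, hrepr, Matrix.mulVec_mulVec, Matrix.mulVec_mulVec, hGK, hsymm]
    | -- positivity
      intro x hx
      rw [hE, hrepr, Matrix.mulVec_mulVec, hGK]
      have hv : (b.repr x : Fin n → ℝ) ≠ 0 := by
        intro h
        exact hx (b.repr.map_eq_zero_iff.mp (Finsupp.coe_eq_zero.mp h))
      have := hS.dotProduct_mulVec_pos hv
      rwa [star_trivial] at this }
end

section
/- Let K be a subfield of ℝ, V a finite-dimensional K-vector space, and S a set of K-linear automorphisms of V. Suppose there exists a symmetric, positive definite, ℝ-bilinear form β on the base change ℝ ⊗[K] V that is invariant under the ℝ-linear extension of every g ∈ S (i.e., β(g·x, g·y) = β(x, y) for all x, y). Then there exists a symmetric K-bilinear form γ on V that is invariant under every g ∈ S (γ(gx, gy) = γ(x, y)) and whose extension to ℝ ⊗[K] V is positive definite. -/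
open TensorProduct Matrix

open TensorProduct

section Descent

variable {K : Type*} [Field K] [Algebra K ℝ]
variable {M : Type*} [AddCommGroup M] [Module K M]
variable {N : Type*} [AddCommGroup N] [Module K N]

lemma lTensor_mem_baseChange (p : Submodule K M) (w : ℝ ⊗[K] (↥p)) :
    (p.subtype.lTensor ℝ) w ∈ p.baseChange ℝ := by
  induction w using TensorProduct.induction_on with
  | zero => simp
  | tmul r m =>
      rw [LinearMap.lTensor_tmul]
      exact Submodule.tmul_mem_baseChange_of_mem r m.2
  | add x y hx hy => rw [map_add]; exact Submodule.add_mem _ hx hy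

lemma mem_ker_baseChange (f : M →ₗ[K] N) {z : ℝ ⊗[K] M} (hz : f.baseChange ℝ z = 0) :
    z ∈ (LinearMap.ker f).baseChange ℝ := by
  have hex : Function.Exact ((LinearMap.ker f).subtype) f := f.exact_subtype_ker_map
  have hex2 := Module.Flat.lTensor_exact (R := K) ℝ hex
  have hz' : (f.lTensor ℝ) z = 0 := by
    have := congrFun f.baseChange_eq_ltensor z
    rw [← this]; exact hz
  obtain ⟨w, hw⟩ := (hex2 z).mp hz'
  rw [← hw]
  exact lTensor_mem_baseChange _ w

lemma baseChange_eq_range (p : Submodule K M) :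
    p.baseChange ℝ = LinearMap.range ((p.subtype).baseChange ℝ) := by
  apply le_antisymm
  · rw [Submodule.baseChange_eq_span, Submodule.span_le]
    rintro - ⟨m, hm, rfl⟩
    exact ⟨1 ⊗ₜ ⟨m, hm⟩, by simp⟩
  · rintro - ⟨w, rfl⟩
    have : (p.subtype).baseChange ℝ w = (p.subtype.lTensor ℝ) w :=
      congrFun (p.subtype).baseChange_eq_ltensor w
    rw [this]
    exact lTensor_mem_baseChange p w

lemma mem_baseChange_inf_ker (p : Submodule K M) (f : M →ₗ[K] N) {z : ℝ ⊗[K] M}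
    (hzp : z ∈ p.baseChange ℝ) (hzf : f.baseChange ℝ z = 0) :
    z ∈ (p ⊓ LinearMap.ker f).baseChange ℝ := by
  rw [baseChange_eq_range] at hzp
  obtain ⟨w, rfl⟩ := hzp
  have hw : (f ∘ₗ p.subtype).baseChange ℝ w = 0 := by
    rw [LinearMap.baseChange_comp]; exact hzf
  have hmem := mem_ker_baseChange (f ∘ₗ p.subtype) hw
  rw [Submodule.baseChange_eq_span] at hmem
  have claim : ∀ u ∈ Submodule.span ℝ
      ((LinearMap.ker (f ∘ₗ p.subtype)).map (TensorProduct.mk K ℝ ↥p 1)),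
      (p.subtype).baseChange ℝ u ∈ (p ⊓ LinearMap.ker f).baseChange ℝ := by
    intro u hu
    induction hu using Submodule.span_induction with
    | mem x hx =>
        obtain ⟨m, hm, rfl⟩ := hx
        simp only [TensorProduct.mk_apply, LinearMap.baseChange_tmul]
        exact Submodule.tmul_mem_baseChange_of_mem 1
          ⟨m.2, LinearMap.mem_ker.mpr (by simpa using hm)⟩
    | zero => simp
    | add x y _ _ hx hy => rw [map_add]; exact Submodule.add_mem _ hx hy
    | smul c x _ hx => rw [_root_.map_smul]; exact Submodule.smul_mem _ c hx
  exact claim w hmem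

lemma mem_baseChange_finset_iInf {σ : Type*} (T : Finset σ) (f : σ → (M →ₗ[K] N))
    {z : ℝ ⊗[K] M} (hz : ∀ i ∈ T, (f i).baseChange ℝ z = 0) :
    z ∈ (⨅ i ∈ T, LinearMap.ker (f i)).baseChange ℝ := by
  classical
  induction T using Finset.induction_on with
  | empty => simp [Submodule.baseChange_top]
  | @insert a T ha ih =>
      have h1 : (⨅ i ∈ insert a T, LinearMap.ker (f i))
          = (⨅ i ∈ T, LinearMap.ker (f i)) ⊓ LinearMap.ker (f a) := by
        rw [Finset.iInf_insert, inf_comm]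
      rw [h1]
      exact mem_baseChange_inf_ker _ _ (ih fun i hi => hz i (Finset.mem_insert_of_mem hi))
        (hz a (Finset.mem_insert_self a T))

lemma exists_finset_iInf_eq {σ : Type*} [IsArtinian K M] (p : σ → Submodule K M) :
    ∃ T : Finset σ, (⨅ i, p i) = ⨅ i ∈ T, p i := by
  classical
  obtain ⟨q, ⟨T0, rfl⟩, hmin⟩ := IsArtinian.set_has_minimal
    (Set.range (fun T : Finset σ => ⨅ i ∈ T, p i)) ⟨⊤, ∅, by simp⟩
  refine ⟨T0, le_antisymm (le_iInf₂ fun i _ => iInf_le p i) (le_iInf fun j => ?_)⟩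
  by_contra hj
  have hlt : (⨅ i ∈ insert j T0, p i) < ⨅ i ∈ T0, p i := by
    rw [Finset.iInf_insert]
    refine lt_of_le_of_ne inf_le_right fun h => hj ?_
    rw [← h]
    exact inf_le_left
  exact hmin _ ⟨insert j T0, rfl⟩ hlt

end Descent

open TensorProduct

section MatrixTransfer

variable {K : Type*} [Field K] [Algebra K ℝ]
variable {ι : Type*} [Fintype ι] [DecidableEq ι]

noncomputable def phiM (K : Type*) [Field K] [Algebra K ℝ] (ι : Type*) [Fintype ι] :
    Matrix ι ι K →ₗ[K] Matrix ι ι ℝ :=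
  (Algebra.linearMap K ℝ).mapMatrix

lemma phiM_apply (C : Matrix ι ι K) (i j : ι) :
    phiM K ι C i j = algebraMap K ℝ (C i j) := rfl

noncomputable def EM (K : Type*) [Field K] [Algebra K ℝ] (ι : Type*) [Fintype ι]
    [DecidableEq ι] : (ℝ ⊗[K] Matrix ι ι K) ≃ₗ[ℝ] Matrix ι ι ℝ :=
  ((Matrix.stdBasis K ι ι).baseChange ℝ).equiv (Matrix.stdBasis ℝ ι ι) (Equiv.refl _)

lemma EM_one_tmul (C : Matrix ι ι K) : EM K ι (1 ⊗ₜ C) = phiM K ι C := by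
  have h : ((EM K ι).toLinearMap.restrictScalars K) ∘ₗ
      ((TensorProduct.mk K ℝ (Matrix ι ι K)) 1) = phiM K ι := by
    apply (Matrix.stdBasis K ι ι).ext
    intro p
    have h1 : (1 : ℝ) ⊗ₜ (Matrix.stdBasis K ι ι p) =
        ((Matrix.stdBasis K ι ι).baseChange ℝ) p := (Module.Basis.baseChange_apply ℝ _ p).symm
    have e1 : (EM K ι) ((1:ℝ) ⊗ₜ (Matrix.stdBasis K ι ι) p) = Matrix.stdBasis ℝ ι ι p := by
      rw [h1]; exact Module.Basis.equiv_apply _ p _ _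
    simp only [LinearMap.coe_comp, LinearMap.coe_restrictScalars, Function.comp_apply,
      TensorProduct.mk_apply, LinearEquiv.coe_coe]
    rw [e1]
    ext a b
    rcases p with ⟨i, j⟩
    rw [Matrix.stdBasis_eq_single, phiM_apply, Matrix.stdBasis_eq_single]
    simp [Matrix.single, apply_ite (algebraMap K ℝ)]
  exact congrFun (congrArg (fun f => f.toFun) h) C

lemma EM_tmul (r : ℝ) (C : Matrix ι ι K) : EM K ι (r ⊗ₜ C) = r • phiM K ι C := by
  have : (r ⊗ₜ C : ℝ ⊗[K] Matrix ι ι K) = r • (1 ⊗ₜ C) := by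
    rw [smul_tmul', smul_eq_mul, mul_one]
  rw [this, _root_.map_smul, EM_one_tmul]

lemma EM_zero : EM K ι (0 : ℝ ⊗[K] Matrix ι ι K) = 0 := by
  rw [← LinearEquiv.coe_coe]; exact map_zero _

lemma EM_add (x y : ℝ ⊗[K] Matrix ι ι K) : EM K ι (x + y) = EM K ι x + EM K ι y := by
  rw [← LinearEquiv.coe_coe]; exact map_add _ x y

lemma EM_smul (c : ℝ) (x : ℝ ⊗[K] Matrix ι ι K) : EM K ι (c • x) = c • EM K ι x := by
  rw [← LinearEquiv.coe_coe]; exact _root_.map_smul _ c x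

lemma EM_comm (L : Matrix ι ι K →ₗ[K] Matrix ι ι K) (Lr : Matrix ι ι ℝ →ₗ[ℝ] Matrix ι ι ℝ)
    (hcomm : ∀ C, phiM K ι (L C) = Lr (phiM K ι C)) (w : ℝ ⊗[K] Matrix ι ι K) :
    EM K ι ((L.baseChange ℝ) w) = Lr (EM K ι w) := by
  induction w using TensorProduct.induction_on with
  | zero => rw [map_zero, EM_zero, map_zero]
  | tmul r C => rw [LinearMap.baseChange_tmul, EM_tmul, EM_tmul, _root_.map_smul, hcomm]
  | add x y hx hy => rw [map_add, map_add, hx, hy, EM_add, map_add]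

lemma EM_baseChange_ker (L : Matrix ι ι K →ₗ[K] Matrix ι ι K)
    (Lr : Matrix ι ι ℝ →ₗ[ℝ] Matrix ι ι ℝ)
    (hcomm : ∀ C, phiM K ι (L C) = Lr (phiM K ι C)) (w : ℝ ⊗[K] Matrix ι ι K)
    (hw : Lr (EM K ι w) = 0) : (L.baseChange ℝ) w = 0 := by
  have := EM_comm L Lr hcomm w
  rw [hw] at this
  refine (EM K ι).injective ?_
  rw [this, EM_zero]

lemma EM_mem_span (W : Submodule K (Matrix ι ι K)) {w : ℝ ⊗[K] Matrix ι ι K}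
    (hw : w ∈ W.baseChange ℝ) :
    EM K ι w ∈ Submodule.span ℝ ((phiM K ι) '' W) := by
  rw [Submodule.baseChange_eq_span] at hw
  induction hw using Submodule.span_induction with
  | mem x hx =>
      obtain ⟨C, hC, rfl⟩ := hx
      rw [TensorProduct.mk_apply, EM_one_tmul]
      exact Submodule.subset_span ⟨C, hC, rfl⟩
  | zero => rw [EM_zero]; exact Submodule.zero_mem _
  | add x y _ _ hx hy => rw [EM_add]; exact Submodule.add_mem _ hx hy
  | smul c x _ hx => rw [EM_smul]; exact Submodule.smul_mem _ c hx

end MatrixTransfer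

open TensorProduct Matrix

section CondMaps

variable (R : Type*) [CommRing R] (ι : Type*) [Fintype ι]

/-- `C ↦ Cᵀ - C` as a linear map. -/
def symL : Matrix ι ι R →ₗ[R] Matrix ι ι R where
  toFun C := Cᵀ - C
  map_add' x y := by rw [Matrix.transpose_add]; abel
  map_smul' c x := by dsimp only [RingHom.id_apply]; rw [Matrix.transpose_smul, smul_sub]

/-- `C ↦ Aᵀ * C * A - C` as a linear map. -/
def invL (A : Matrix ι ι R) : Matrix ι ι R →ₗ[R] Matrix ι ι R where
  toFun C := Aᵀ * C * A - C
  map_add' x y := by rw [Matrix.mul_add, Matrix.add_mul]; abel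
  map_smul' c x := by
    dsimp only [RingHom.id_apply]
    rw [Matrix.mul_smul, Matrix.smul_mul, smul_sub]

lemma symL_apply (C : Matrix ι ι R) : symL R ι C = Cᵀ - C := rfl

lemma invL_apply (A C : Matrix ι ι R) : invL R ι A C = Aᵀ * C * A - C := rfl

end CondMaps

section PhiCompat

variable {K : Type*} [Field K] [Algebra K ℝ]
variable {ι : Type*} [Fintype ι]

lemma phi_symL (C : Matrix ι ι K) :
    phiM K ι (symL K ι C) = symL ℝ ι (phiM K ι C) := by
  ext i j
  simp [symL_apply, phiM_apply, Matrix.sub_apply, Matrix.transpose_apply, map_sub]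

lemma phi_invL (A : Matrix ι ι K) (C : Matrix ι ι K) :
    phiM K ι (invL K ι A C) = invL ℝ ι (phiM K ι A) (phiM K ι C) := by
  ext i j
  simp [invL_apply, phiM_apply, Matrix.sub_apply, Matrix.mul_apply, Matrix.transpose_apply,
    map_sub, map_sum, _root_.map_mul, Finset.mul_sum, Finset.sum_mul]

end PhiCompat

section Analysis

variable {ι : Type*} [Fintype ι]

lemma dot_expand (M : Matrix ι ι ℝ) (x : ι → ℝ) :
    dotProduct x (M.mulVec x) = ∑ i, ∑ j, x i * (M i j * x j) := by
  simp [dotProduct, Matrix.mulVec, Finset.mul_sum]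

/-- quadratic evaluation as a linear functional in the matrix -/
def quadF (x : ι → ℝ) : Matrix ι ι ℝ →ₗ[ℝ] ℝ where
  toFun M := dotProduct x (M.mulVec x)
  map_add' M N := by rw [Matrix.add_mulVec, dotProduct_add]
  map_smul' c M := by
    dsimp only [RingHom.id_apply]
    rw [Matrix.smul_mulVec, dotProduct_smul]

lemma abs_quad_le (M : Matrix ι ι ℝ) (x : ι → ℝ) (hx : ∀ p, |x p| ≤ 1) :
    |dotProduct x (M.mulVec x)| ≤ ∑ p, ∑ q, |M p q| := by
  rw [dot_expand]
  refine le_trans (Finset.abs_sum_le_sum_abs _ _) (Finset.sum_le_sum fun p _ => ?_)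
  refine le_trans (Finset.abs_sum_le_sum_abs _ _) (Finset.sum_le_sum fun q _ => ?_)
  rw [abs_mul, abs_mul]
  calc |x p| * (|M p q| * |x q|) ≤ 1 * (|M p q| * 1) := by
        refine mul_le_mul (hx p) ?_ (by positivity) zero_le_one
        exact mul_le_mul_of_nonneg_left (hx q) (abs_nonneg _)
    _ = |M p q| := by ring

lemma exists_good_combination {k : ℕ} (t : Fin k → ℝ) (D : Fin k → Matrix ι ι ℝ)
    (hpos : ∀ x : ι → ℝ, x ≠ 0 →
      0 < dotProduct x ((∑ i, t i • D i).mulVec x)) :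
    ∃ q : Fin k → ℚ, ∀ x : ι → ℝ, x ≠ 0 →
      0 < dotProduct x ((∑ i, (q i : ℝ) • D i).mulVec x) := by
  rcases isEmpty_or_nonempty ι with hι | hι
  · exact ⟨0, fun x hx => absurd (funext fun i => (hι.false i).elim) hx⟩
  classical
  set B := ∑ i, t i • D i with hB
  have hf : Continuous fun x : ι → ℝ => dotProduct x (B.mulVec x) := by
    simp only [dot_expand]
    exact continuous_finset_sum _ fun p _ => continuous_finset_sum _ fun j _ =>
      (continuous_apply p).mul (continuous_const.mul (continuous_apply j))
  obtain ⟨x₀, hx₀S, hx₀min⟩ := (isCompact_sphere (0 : ι → ℝ) 1).exists_isMinOn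
    ⟨fun _ => (1 : ℝ), by simp [mem_sphere_zero_iff_norm]⟩ hf.continuousOn
  have hx₀norm : ‖x₀‖ = 1 := mem_sphere_zero_iff_norm.mp hx₀S
  set m := dotProduct x₀ (B.mulVec x₀) with hm
  have hmpos : 0 < m := hpos x₀ (fun h => by simp [h] at hx₀norm)
  set c : Fin k → ℝ := fun i => ∑ p, ∑ q, |D i p q| with hc
  have hcnn : ∀ i, 0 ≤ c i :=
    fun i => Finset.sum_nonneg fun p _ => Finset.sum_nonneg fun q _ => abs_nonneg _
  have hchoice : ∀ i : Fin k, ∃ qq : ℚ,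
      |t i - (qq : ℝ)| < m / (2 * (k + 1) * (c i + 1)) := by
    intro i
    refine exists_rat_near (t i) ?_
    have h1 : (0:ℝ) < c i + 1 := by linarith [hcnn i]
    positivity
  choose q hq using hchoice
  refine ⟨q, ?_⟩
  have hs : ∀ x ∈ Metric.sphere (0 : ι → ℝ) 1,
      0 < dotProduct x ((∑ i, (q i : ℝ) • D i).mulVec x) := by
    intro x hxS
    have hxnorm : ‖x‖ = 1 := mem_sphere_zero_iff_norm.mp hxS
    have hxb : ∀ p, |x p| ≤ 1 := by
      intro p
      have := norm_le_pi_norm x p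
      rw [hxnorm] at this
      simpa using this
    have hBx : m ≤ dotProduct x (B.mulVec x) := hx₀min hxS
    have hdiff : dotProduct x ((∑ i, (q i : ℝ) • D i).mulVec x)
        = dotProduct x (B.mulVec x)
          + ∑ i, ((q i : ℝ) - t i) * dotProduct x ((D i).mulVec x) := by
      have e1 : dotProduct x ((∑ i, (q i : ℝ) • D i).mulVec x)
          = ∑ i, (q i : ℝ) * dotProduct x ((D i).mulVec x) := by
        show quadF x (∑ i, (q i : ℝ) • D i) = _
        rw [map_sum]
        exact Finset.sum_congr rfl fun i _ => by rw [_root_.map_smul, smul_eq_mul]; rfl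
      have e2 : dotProduct x (B.mulVec x)
          = ∑ i, t i * dotProduct x ((D i).mulVec x) := by
        show quadF x B = _
        rw [hB, map_sum]
        exact Finset.sum_congr rfl fun i _ => by rw [_root_.map_smul, smul_eq_mul]; rfl
      rw [e1, e2, ← Finset.sum_add_distrib]
      refine Finset.sum_congr rfl fun i _ => by ring
    have herr : |∑ i, ((q i : ℝ) - t i) * dotProduct x ((D i).mulVec x)| ≤ m / 2 := by
      refine le_trans (Finset.abs_sum_le_sum_abs _ _) ?_
      have hterm : ∀ i : Fin k,
          |((q i : ℝ) - t i) * dotProduct x ((D i).mulVec x)| ≤ m / (2 * (k + 1)) := by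
        intro i
        rw [abs_mul]
        have h1 : |(q i : ℝ) - t i| ≤ m / (2 * (k + 1) * (c i + 1)) := by
          rw [abs_sub_comm]
          exact le_of_lt (hq i)
        have h2 : |dotProduct x ((D i).mulVec x)| ≤ c i + 1 := by
          refine le_trans (abs_quad_le (D i) x hxb) ?_
          rw [hc]; linarith
        have h3 : (0:ℝ) < c i + 1 := by linarith [hcnn i]
        calc |(q i : ℝ) - t i| * |dotProduct x ((D i).mulVec x)|
            ≤ (m / (2 * (k + 1) * (c i + 1))) * (c i + 1) := by
              refine mul_le_mul h1 h2 (abs_nonneg _) ?_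
              positivity
          _ = m / (2 * (k + 1)) := by field_simp
      refine le_trans (Finset.sum_le_sum fun i _ => hterm i) ?_
      rw [Finset.sum_const, Finset.card_univ, Fintype.card_fin, nsmul_eq_mul]
      have hkk : (0:ℝ) ≤ (k : ℝ) := Nat.cast_nonneg k
      calc (k : ℝ) * (m / (2 * ((k:ℝ) + 1))) = ((k:ℝ) * m) / (2 * ((k:ℝ) + 1)) := by ring
        _ ≤ m / 2 := by
            rw [div_le_div_iff₀ (by positivity) (by norm_num)]
            nlinarith [hmpos.le]
    have : dotProduct x ((∑ i, (q i : ℝ) • D i).mulVec x) ≥ m - m / 2 := by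
      rw [hdiff]
      have := neg_abs_le (∑ i, ((q i : ℝ) - t i) * dotProduct x ((D i).mulVec x))
      linarith
    linarith
  intro x hx
  have hnx : ‖x‖ ≠ 0 := norm_ne_zero_iff.mpr hx
  have hnxpos : 0 < ‖x‖ := norm_pos_iff.mpr hx
  set u := ‖x‖⁻¹ • x with hu
  have huS : u ∈ Metric.sphere (0 : ι → ℝ) 1 := by
    rw [mem_sphere_zero_iff_norm, hu, norm_smul, norm_inv, norm_norm,
      inv_mul_cancel₀ hnx]
  have hpu := hs u huS
  have hxu : x = ‖x‖ • u := by
    rw [hu, smul_smul, mul_inv_cancel₀ hnx, one_smul]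
  rw [hxu, Matrix.mulVec_smul, smul_dotProduct, dotProduct_smul,
    smul_eq_mul, smul_eq_mul]
  positivity

end Analysis

open TensorProduct Matrix

section Eval

variable {R : Type*} [CommRing R] {N : Type*} [AddCommGroup N] [Module R N]
variable {ι : Type*} [Fintype ι] [DecidableEq ι]

lemma eval_dot (e : Module.Basis ι R N) (δ : N →ₗ[R] N →ₗ[R] R) (u v : N) :
    δ u v = dotProduct (⇑(e.repr u))
      ((LinearMap.toMatrix₂ e e δ).mulVec (⇑(e.repr v))) := by
  conv_lhs => rw [← Module.Basis.sum_repr e u, ← Module.Basis.sum_repr e v]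
  simp only [map_sum, _root_.map_smul, LinearMap.sum_apply, LinearMap.smul_apply, smul_eq_mul]
  simp only [dotProduct, Matrix.mulVec, LinearMap.toMatrix₂_apply, Finset.mul_sum]
  rw [Finset.sum_comm]
  refine Finset.sum_congr rfl fun i _ => Finset.sum_congr rfl fun j _ => by ring

lemma dot_symm (M : Matrix ι ι R) (hM : Mᵀ = M) (x y : ι → R) :
    dotProduct x (M.mulVec y) = dotProduct y (M.mulVec x) := by
  conv_lhs => rw [← hM]
  rw [Matrix.mulVec_transpose, dotProduct_comm, ← Matrix.dotProduct_mulVec]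

end Eval

/-- If a set `S` of automorphisms of a `K`-vector space `V` (`K` a subfield of `ℝ`)
leaves invariant some symmetric positive definite `ℝ`-bilinear form on `ℝ ⊗[K] V`,
then it leaves invariant a symmetric `K`-bilinear form on `V` whose real extension
is positive definite. -/
theorem exists_rational_invariant_positive_form
    (K : Type*) [Field K] [Algebra K ℝ]
    (V : Type*) [AddCommGroup V] [Module K V] [FiniteDimensional K V]
    (S : Set (V ≃ₗ[K] V))
    (β : (ℝ ⊗[K] V) →ₗ[ℝ] (ℝ ⊗[K] V) →ₗ[ℝ] ℝ)
    (hβsymm : ∀ x y, β x y = β y x)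
    (hβpos : ∀ x, x ≠ 0 → 0 < β x x)
    (hβinv : ∀ g ∈ S, ∀ x y,
      β (LinearMap.baseChange ℝ g.toLinearMap x) (LinearMap.baseChange ℝ g.toLinearMap y)
        = β x y) :
    ∃ γ : V →ₗ[K] V →ₗ[K] K,
      (∀ x y, γ x y = γ y x) ∧
      (∀ g ∈ S, ∀ x y, γ (g x) (g y) = γ x y) ∧
      (∀ z : ℝ ⊗[K] V, z ≠ 0 → 0 < LinearMap.BilinForm.baseChange ℝ γ z z) := by
  classical
  set n := Module.finrank K V with hn
  set b : Module.Basis (Fin n) K V := Module.finBasis K V with hb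
  set bR : Module.Basis (Fin n) ℝ (ℝ ⊗[K] V) := b.baseChange ℝ with hbR
  set A : ↥S → Matrix (Fin n) (Fin n) K :=
    fun g => LinearMap.toMatrix b b (g : V ≃ₗ[K] V).toLinearMap with hA
  set fK : Option ↥S → (Matrix (Fin n) (Fin n) K →ₗ[K] Matrix (Fin n) (Fin n) K) :=
    fun o => Option.elim o (symL K (Fin n)) (fun g => invL K (Fin n) (A g)) with hfK
  set W : Submodule K (Matrix (Fin n) (Fin n) K) := ⨅ i, LinearMap.ker (fK i) with hW
  set B : Matrix (Fin n) (Fin n) ℝ := LinearMap.toMatrix₂ bR bR β with hB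
  have hbRa : ∀ i, bR i = (1 : ℝ) ⊗ₜ[K] b i := fun i => Module.Basis.baseChange_apply ℝ b i
  -- the matrix of the base change of an automorphism
  have hgR : ∀ g : ↥S,
      LinearMap.toMatrix bR bR (LinearMap.baseChange ℝ (g : V ≃ₗ[K] V).toLinearMap)
        = phiM K (Fin n) (A g) := by
    intro g
    ext i j
    rw [LinearMap.toMatrix_apply, phiM_apply, hbRa j, LinearMap.baseChange_tmul, hbR,
      Module.Basis.baseChange_repr_tmul]
    rw [hA]
    simp only [LinearMap.toMatrix_apply]
    rw [Algebra.algebraMap_eq_smul_one]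
  -- symmetry of B
  have hBsym : symL ℝ (Fin n) B = 0 := by
    rw [symL_apply, sub_eq_zero]
    ext i j
    rw [Matrix.transpose_apply, hB, LinearMap.toMatrix₂_apply, LinearMap.toMatrix₂_apply]
    exact hβsymm _ _
  -- invariance of B
  have hBinv : ∀ g : ↥S, invL ℝ (Fin n) (phiM K (Fin n) (A g)) B = 0 := by
    intro g
    rw [invL_apply, sub_eq_zero, ← hgR g, hB, ← LinearMap.toMatrix₂_compl₁₂]
    congr 1
    refine LinearMap.ext fun x => LinearMap.ext fun y => ?_
    exact hβinv (g : V ≃ₗ[K] V) g.2 x y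
  -- the tensor element corresponding to B
  set z := (EM K (Fin n)).symm B with hzdef
  have hEz : EM K (Fin n) z = B := (EM K (Fin n)).apply_symm_apply B
  have hzker : ∀ i, ((fK i).baseChange ℝ) z = 0 := by
    intro i
    cases i with
    | none =>
        exact EM_baseChange_ker _ (symL ℝ (Fin n)) phi_symL z (by rw [hEz]; exact hBsym)
    | some g =>
        exact EM_baseChange_ker _ (invL ℝ (Fin n) (phiM K (Fin n) (A g)))
          (phi_invL (A g)) z (by rw [hEz]; exact hBinv g)
  obtain ⟨T, hT⟩ := exists_finset_iInf_eq (fun i => LinearMap.ker (fK i))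
  have hzW : z ∈ W.baseChange ℝ := by
    rw [hW, hT]
    exact mem_baseChange_finset_iInf T fK (fun i _ => hzker i)
  have hBspan : B ∈ Submodule.span ℝ ((phiM K (Fin n)) '' W) := by
    have := EM_mem_span W hzW
    rwa [hEz] at this
  obtain ⟨k, t, y, hy⟩ := Submodule.mem_span_set'.mp hBspan
  have hyy : ∀ i, ∃ C, C ∈ W ∧ phiM K (Fin n) C = (y i : Matrix (Fin n) (Fin n) ℝ) := by
    intro i
    obtain ⟨C, hC, hCeq⟩ := (y i).2
    exact ⟨C, hC, hCeq⟩
  choose Cs hCsW hCs using hyy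
  -- positivity of the quadratic form attached to B
  have hBq : ∀ x : Fin n → ℝ, x ≠ 0 →
      0 < dotProduct x ((∑ i, t i • phiM K (Fin n) (Cs i)).mulVec x) := by
    intro x hx
    have hsum : (∑ i, t i • phiM K (Fin n) (Cs i)) = B := by
      simp_rw [hCs]; exact hy
    rw [hsum]
    set u : ℝ ⊗[K] V := bR.repr.symm (Finsupp.equivFunOnFinite.symm x) with hu
    have hurepr : ⇑(bR.repr u) = x := by
      rw [hu, LinearEquiv.apply_symm_apply]; rfl
    have hune : u ≠ 0 := by
      intro h
      apply hx
      rw [← hurepr, h, map_zero]; rfl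
    have := hβpos u hune
    rwa [eval_dot bR β u u, hurepr, ← hB] at this
  -- rational approximation
  obtain ⟨qr, hqr⟩ := exists_good_combination t (fun i => phiM K (Fin n) (Cs i)) hBq
  -- the rational matrix
  set C' : Matrix (Fin n) (Fin n) K := ∑ i, ((qr i : K)) • Cs i with hC'
  have hC'W : C' ∈ W := Submodule.sum_mem _ fun i _ => Submodule.smul_mem _ _ (hCsW i)
  have hphiC' : phiM K (Fin n) C' = ∑ i, ((qr i : ℝ)) • phiM K (Fin n) (Cs i) := by
    rw [hC', map_sum]
    refine Finset.sum_congr rfl fun i _ => ?_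
    rw [_root_.map_smul, ← algebraMap_smul ℝ ((qr i : ℚ) : K) (phiM K (Fin n) (Cs i)),
      map_ratCast]
  have hqpos : ∀ x : Fin n → ℝ, x ≠ 0 →
      0 < dotProduct x ((phiM K (Fin n) C').mulVec x) := by
    intro x hx
    rw [hphiC']
    exact hqr x hx
  have hC'mem : ∀ i, C' ∈ LinearMap.ker (fK i) :=
    fun i => (Submodule.mem_iInf _).mp (hW ▸ hC'W) i
  have hC'sym : C'ᵀ = C' := by
    have h2 : symL K (Fin n) C' = 0 := LinearMap.mem_ker.mp (hC'mem none)
    rwa [symL_apply, sub_eq_zero] at h2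
  have hC'inv : ∀ g : ↥S, (A g)ᵀ * C' * (A g) = C' := by
    intro g
    have h2 : invL K (Fin n) (A g) C' = 0 := LinearMap.mem_ker.mp (hC'mem (some g))
    rwa [invL_apply, sub_eq_zero] at h2
  have hγmat : LinearMap.toMatrix₂ b b
      ((LinearMap.toMatrix₂ b b).symm C' : V →ₗ[K] V →ₗ[K] K) = C' :=
    LinearEquiv.apply_symm_apply _ _
  refine ⟨(LinearMap.toMatrix₂ b b).symm C', ?_, ?_, ?_⟩
  · -- symmetry
    intro x y
    rw [eval_dot b _ x y, eval_dot b _ y x, hγmat]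
    exact dot_symm C' hC'sym _ _
  · -- invariance
    intro g hg x y
    have hcomp : ((LinearMap.toMatrix₂ b b).symm C').compl₁₂
        (g : V ≃ₗ[K] V).toLinearMap (g : V ≃ₗ[K] V).toLinearMap
        = (LinearMap.toMatrix₂ b b).symm C' := by
      apply (LinearMap.toMatrix₂ b b).injective
      rw [LinearMap.toMatrix₂_compl₁₂ b b b b, hγmat]
      exact hC'inv ⟨g, hg⟩
    simpa only [LinearMap.compl₁₂_apply, LinearEquiv.coe_coe]
      using LinearMap.congr_fun (LinearMap.congr_fun hcomp x) y
  · -- positivity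
    have hmat2 : LinearMap.toMatrix₂ bR bR
        (LinearMap.BilinForm.baseChange ℝ ((LinearMap.toMatrix₂ b b).symm C'))
        = phiM K (Fin n) C' := by
      ext i j
      rw [LinearMap.toMatrix₂_apply, hbRa i, hbRa j, LinearMap.BilinForm.baseChange_tmul,
        phiM_apply]
      have hg : ((LinearMap.toMatrix₂ b b).symm C' : V →ₗ[K] V →ₗ[K] K) (b i) (b j) = C' i j := by
        conv_rhs => rw [← hγmat]
        rw [LinearMap.toMatrix₂_apply]
      rw [hg, mul_one, Algebra.algebraMap_eq_smul_one]
    intro zz hzz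
    rw [eval_dot bR _ zz zz, hmat2]
    refine hqpos _ ?_
    intro h
    apply hzz
    have h0 : bR.repr zz = 0 := Finsupp.ext fun i => by
      have := congrFun h i
      simpa using this
    exact (LinearEquiv.map_eq_zero_iff bR.repr).mp h0
end

section
/- Let F be a field, M a finite index type, (V_α)_{α ∈ M} a family of F-vector spaces, and for each α ∈ M let E_α be an alternating bilinear form on V_α (E_α(x,x) = 0 for all x) and γ_α a symmetric bilinear form on V_α. Let B be a bilinear form on the tensor product ⨂_{α ∈ M} V_α such that on pure tensors B(⊗_α x_α, ⊗_α y_α) = Σ_{α ∈ M} ( E_α(x_α, y_α) · ∏_{β ∈ M, β ≠ α} γ_β(x_β, y_β) ). Then B is skew-symmetric: B(x, y) = -B(y, x) for all x, y in the tensor product. -/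
open scoped TensorProduct

/-- The form `Ẽ(⊗x_α, ⊗y_α) = Σ_α E_α(x_α, y_α) ∏_{β ≠ α} γ_β(x_β, y_β)` on a tensor
product of vector spaces is skew-symmetric when each `E_α` is alternating and each
`γ_β` is symmetric. -/
theorem tensor_sum_form_skew
    (F : Type*) [Field F]
    (M : Type*) [Fintype M] [DecidableEq M]
    (V : M → Type*) [∀ α, AddCommGroup (V α)] [∀ α, Module F (V α)]
    (E : ∀ α, V α →ₗ[F] V α →ₗ[F] F)
    (hE : ∀ α, ∀ x, E α x x = 0)
    (γ : ∀ α, V α →ₗ[F] V α →ₗ[F] F)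
    (hγ : ∀ α, ∀ x y, γ α x y = γ α y x)
    (B : (PiTensorProduct F V) →ₗ[F] (PiTensorProduct F V) →ₗ[F] F)
    (hB : ∀ x y : (α : M) → V α,
      B (PiTensorProduct.tprod F x) (PiTensorProduct.tprod F y)
        = ∑ α : M, (E α (x α) (y α)) *
            ∏ β ∈ Finset.univ.erase α, γ β (x β) (y β)) :
    ∀ x y : PiTensorProduct F V, B x y = -B y x := by
  have hEskew : ∀ α x y, E α x y = - E α y x := by
    intro α x y
    have h := hE α (x + y)
    simp only [map_add, LinearMap.add_apply, hE] at h
    linear_combination h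
  have key : ∀ f g : (α : M) → V α,
      B (PiTensorProduct.tprod F f) (PiTensorProduct.tprod F g)
        = - B (PiTensorProduct.tprod F g) (PiTensorProduct.tprod F f) := by
    intro f g
    rw [hB, hB, ← Finset.sum_neg_distrib]
    refine Finset.sum_congr rfl fun α _ => ?_
    rw [hEskew α (f α) (g α)]
    have : ∏ β ∈ Finset.univ.erase α, γ β (f β) (g β)
        = ∏ β ∈ Finset.univ.erase α, γ β (g β) (f β) :=
      Finset.prod_congr rfl fun β _ => hγ β _ _
    rw [this]; ring
  intro x y
  induction x using PiTensorProduct.induction_on with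
  | smul_tprod c f =>
      induction y using PiTensorProduct.induction_on with
      | smul_tprod d g =>
          simp only [map_smul, LinearMap.smul_apply, smul_eq_mul, key f g]
          ring
      | add y1 y2 h1 h2 =>
          simp only [map_add, LinearMap.add_apply] at *
          linear_combination h1 + h2
  | add x1 x2 h1 h2 =>
      simp only [map_add, LinearMap.add_apply] at *
      linear_combination h1 + h2
end

section
/- Let F be a field, M a finite index type, (V_α)_{α ∈ M} a family of F-vector spaces, α₀ ∈ M a distinguished index, and for each α ∈ M let E_α be an alternating bilinear form on V_α and γ_α a symmetric bilinear form on V_α. Let J be a linear endomorphism of V_{α₀} such that E_{α₀}(x, Jy) = E_{α₀}(y, Jx) for all x, y ∈ V_{α₀} and γ_{α₀}(x, Jy) = -γ_{α₀}(y, Jx) for all x, y ∈ V_{α₀}. Let J̃ be the endomorphism of ⨂_{α ∈ M} V_α induced by the family of maps (I_α)_{α ∈ M} with I_{α₀} = J and I_α = id for α ≠ α₀. Let B be a bilinear form on ⨂_{α ∈ M} V_α such that on pure tensors B(⊗_α x_α, ⊗_α y_α) = Σ_{α ∈ M} ( E_α(x_α, y_α) · ∏_{β ∈ M, β ≠ α}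 γ_β(x_β, y_β) ). Then B(x, J̃ y) = B(y, J̃ x) for all x, y in the tensor product, i.e., the bilinear form (x, y) ↦ B(x, J̃ y) is symmetric. -/
open scoped TensorProduct

/-- If `E_{α₀}(x, Jy)` is symmetric and `γ_{α₀}(x, Jy)` is skew-symmetric, then the
form `(x, y) ↦ Ẽ(x, J̃ y)` on the tensor product is symmetric, where
`Ẽ(⊗x_α, ⊗y_α) = Σ_α E_α(x_α, y_α) ∏_{β ≠ α} γ_β(x_β, y_β)` and `J̃` is induced by
`J` on the factor `V_{α₀}` and the identity on the other factors. -/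
theorem tensor_sum_form_J_symmetric
    (F : Type*) [Field F]
    (M : Type*) [Fintype M] [DecidableEq M]
    (V : M → Type*) [∀ α, AddCommGroup (V α)] [∀ α, Module F (V α)]
    (α₀ : M)
    (E : ∀ α, V α →ₗ[F] V α →ₗ[F] F)
    (hE : ∀ α, ∀ x, E α x x = 0)
    (γ : ∀ α, V α →ₗ[F] V α →ₗ[F] F)
    (hγ : ∀ α, ∀ x y, γ α x y = γ α y x)
    (J : V α₀ →ₗ[F] V α₀)
    (hEJ : ∀ x y, E α₀ x (J y) = E α₀ y (J x))
    (hγJ : ∀ x y, γ α₀ x (J y) = -γ α₀ y (J x))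
    (B : (PiTensorProduct F V) →ₗ[F] (PiTensorProduct F V) →ₗ[F] F)
    (hB : ∀ x y : (α : M) → V α,
      B (PiTensorProduct.tprod F x) (PiTensorProduct.tprod F y)
        = ∑ α : M, (E α (x α) (y α)) *
            ∏ β ∈ Finset.univ.erase α, γ β (x β) (y β)) :
    ∀ x y : PiTensorProduct F V,
      B x (PiTensorProduct.map
        (Function.update (fun α => (LinearMap.id : V α →ₗ[F] V α)) α₀ J) y)
        = B y (PiTensorProduct.map
            (Function.update (fun α => (LinearMap.id : V α →ₗ[F] V α)) α₀ J) x) := by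
  have hEskew : ∀ α (x y : V α), E α x y = - E α y x := by
    intro α x y
    have h := hE α (x + y)
    simp only [map_add, LinearMap.add_apply] at h
    linear_combination h - hE α x - hE α y
  set upd := Function.update (fun α => (LinearMap.id : V α →ₗ[F] V α)) α₀ J with hupd
  have key : ∀ x y : (α : M) → V α,
      B (PiTensorProduct.tprod F x) (PiTensorProduct.map upd (PiTensorProduct.tprod F y))
        = B (PiTensorProduct.tprod F y) (PiTensorProduct.map upd (PiTensorProduct.tprod F x)) := by
    intro x y
    rw [PiTensorProduct.map_tprod, PiTensorProduct.map_tprod, hB, hB]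
    apply Finset.sum_congr rfl
    intro α _
    by_cases hα : α = α₀
    · subst hα
      simp only [hupd, Function.update_self, hEJ]
      congr 1
      apply Finset.prod_congr rfl
      intro β hβ
      have hβ' : β ≠ α := Finset.ne_of_mem_erase hβ
      simp [Function.update_of_ne hβ', hγ]
    · have hmem : α₀ ∈ Finset.univ.erase α := by
        simp [Ne.symm hα]
      rw [← Finset.mul_prod_erase _ _ hmem, ← Finset.mul_prod_erase _ _ hmem]
      simp only [hupd, Function.update_self, Function.update_of_ne hα]
      have hprod : ∀ β ∈ (Finset.univ.erase α).erase α₀,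
          (γ β (x β)) ((Function.update (fun α => (LinearMap.id : V α →ₗ[F] V α)) α₀ J) β (y β))
            = (γ β (y β)) ((Function.update (fun α => (LinearMap.id : V α →ₗ[F] V α)) α₀ J) β (x β)) := by
        intro β hβ
        have hβ' : β ≠ α₀ := Finset.ne_of_mem_erase hβ
        simp [Function.update_of_ne hβ', hγ]
      rw [Finset.prod_congr rfl hprod, hEskew α (x α), hγJ]
      simp only [LinearMap.id_apply]
      ring
  intro x y
  induction x using PiTensorProduct.induction_on with
  | smul_tprod c f =>
    induction y using PiTensorProduct.induction_on with
    | smul_tprod d g =>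
      simp only [LinearMap.map_smul, LinearMap.smul_apply, smul_eq_mul]
      rw [key f g]; ring
    | add u v hu hv =>
      simp only [LinearMap.map_add, LinearMap.add_apply, map_add] at *
      rw [hu, hv]
  | add u v hu hv =>
    simp only [LinearMap.map_add, LinearMap.add_apply, map_add] at *
    rw [hu, hv]
end

section
/- Let F be a field, M a finite index type, (V_α)_{α ∈ M} a family of F-vector spaces, α₀ ∈ M a distinguished index, and for each α ∈ M let E_α be an alternating bilinear form on V_α (E_α(x,x) = 0 for all x) and γ_α a symmetric bilinear form on V_α. Let J be a linear endomorphism of V_{α₀}, and let J̃ be the endomorphism of ⨂_{α ∈ M} V_α induced by the family of maps (I_α)_{α ∈ M} with I_{α₀} = J and I_α = id for α ≠ α₀. Let B be a bilinear form on ⨂_{α ∈ M} V_α such that on pure tensors B(⊗_α x_α, ⊗_α y_α) = Σ_{α ∈ M} ( E_α(x_α, y_α) · ∏_{β ∈ M, β ≠ α} γ_β(x_β, y_β) ). Then for every pure tensor x = ⊗_α x_α one has B(x, J̃ x) = E_{α₀}(x_{α₀}, J x_{α₀}) · ∏_{β ∈ M, β ≠ α₀} γ_β(x_β, x_β). -/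
open scoped TensorProduct

/-- Evaluation of the form `Ẽ(x, J̃ x)` on pure tensors: for
`Ẽ(⊗x_α, ⊗y_α) = Σ_α E_α(x_α, y_α) ∏_{β ≠ α} γ_β(x_β, y_β)` with each `E_α`
alternating and each `γ_β` symmetric, and `J̃` induced by `J` on the factor `V_{α₀}`
and the identity elsewhere, one has
`Ẽ(⊗x_α, J̃(⊗x_α)) = E_{α₀}(x_{α₀}, J x_{α₀}) ∏_{β ≠ α₀} γ_β(x_β, x_β)`. -/
theorem tensor_sum_form_J_diagonal
    (F : Type*) [Field F]
    (M : Type*) [Fintype M] [DecidableEq M]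
    (V : M → Type*) [∀ α, AddCommGroup (V α)] [∀ α, Module F (V α)]
    (α₀ : M)
    (E : ∀ α, V α →ₗ[F] V α →ₗ[F] F)
    (hE : ∀ α, ∀ x, E α x x = 0)
    (γ : ∀ α, V α →ₗ[F] V α →ₗ[F] F)
    (hγ : ∀ α, ∀ x y, γ α x y = γ α y x)
    (J : V α₀ →ₗ[F] V α₀)
    (B : (PiTensorProduct F V) →ₗ[F] (PiTensorProduct F V) →ₗ[F] F)
    (hB : ∀ x y : (α : M) → V α,
      B (PiTensorProduct.tprod F x) (PiTensorProduct.tprod F y)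
        = ∑ α : M, (E α (x α) (y α)) *
            ∏ β ∈ Finset.univ.erase α, γ β (x β) (y β)) :
    ∀ x : (α : M) → V α,
      B (PiTensorProduct.tprod F x)
        (PiTensorProduct.map
          (Function.update (fun α => (LinearMap.id : V α →ₗ[F] V α)) α₀ J)
          (PiTensorProduct.tprod F x))
        = E α₀ (x α₀) (J (x α₀)) *
            ∏ β ∈ Finset.univ.erase α₀, γ β (x β) (x β) := by
  intro x
  have hmap : (PiTensorProduct.map
      (Function.update (fun α => (LinearMap.id : V α →ₗ[F] V α)) α₀ J)
      (PiTensorProduct.tprod F x))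
      = PiTensorProduct.tprod F (Function.update x α₀ (J (x α₀))) := by
    rw [PiTensorProduct.map_tprod]
    congr 1
    funext α
    by_cases h : α = α₀
    · subst h; simp
    · simp [Function.update_of_ne h]
  rw [hmap, hB]
  rw [Finset.sum_eq_single α₀]
  · rw [Function.update_self]
    congr 1
    refine Finset.prod_congr rfl fun β hβ => ?_
    rw [Function.update_of_ne (Finset.ne_of_mem_erase hβ)]
  · intro α _ hne
    have : Function.update x α₀ (J (x α₀)) α = x α := Function.update_of_ne hne _ _
    rw [this, hE, zero_mul]
  · simp
end
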